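/- Let F be a finite field with |F| = 2^a where a is odd, and let x be an element of order 3 in SL_2(F). If P is a 2-subgroup of SL_2(F) normalized by x, then P is trivial. (Thus PSL_2(2^a) ≅ SL_2(2^a), a odd, contains elements of order three normalizing no nontrivial 2-subgroup.) -/

import Mathlib

open Matrix

section Aux

variable {F : Type*} [Field F]

/-- 2x2 Cayley-Hamilton, by hand. -/
private lemma aux_cayley (M : Matrix (Fin 2) (Fin 2) F) :
    M * M = M.trace • M - M.det • (1 : Matrix (Fin 2) (Fin 2) F) := by
  ext i j
  fin_cases i <;> fin_cases j <;>
    simp [Matrix.mul_apply, Fin.sum_univ_two, Matrix.trace_fin_two, Matrix.det_fin_two,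
      Matrix.one_apply, Matrix.smul_apply, Matrix.sub_apply] <;> ring

/-- trace and det of a nonzero square-zero 2x2 matrix vanish. -/
private lemma aux_trace_det (M : Matrix (Fin 2) (Fin 2) F) (hM0 : M ≠ 0) (hM2 : M * M = 0) :
    M.trace = 0 ∧ M.det = 0 := by
  haveI : Nonempty (Fin 2) := ⟨0⟩
  have hdet : M.det = 0 := by
    have : M.det * M.det = 0 := by rw [← Matrix.det_mul, hM2]; simp
    exact mul_self_eq_zero.mp this
  refine ⟨?_, hdet⟩
  have h := aux_cayley M
  rw [hM2, hdet, zero_smul, sub_zero] at h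
  by_contra htr
  apply hM0
  ext i j
  have := congrFun (congrFun h i) j
  simp only [Matrix.smul_apply, smul_eq_mul, Matrix.zero_apply] at this ⊢
  exact (mul_eq_zero.mp this.symm).resolve_left htr

/-- The centralizer of a nonzero square-zero 2x2 matrix over a char-2 field
is spanned by 1 and the matrix. -/
private lemma aux_centralizer [CharP F 2] (M X : Matrix (Fin 2) (Fin 2) F)
    (hM0 : M ≠ 0) (hM2 : M * M = 0) (hcomm : X * M = M * X) :
    ∃ a b : F, X = a • (1 : Matrix (Fin 2) (Fin 2) F) + b • M := by
  have h2 : (2 : F) = 0 := by exact_mod_cast CharP.cast_eq_zero F 2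
  have e : ∀ i j, ∑ k, M i k * M k j = 0 := by
    intro i j
    have := congrFun (congrFun hM2 i) j
    simpa [Matrix.mul_apply] using this
  have f : ∀ i j, ∑ k, X i k * M k j = ∑ k, M i k * X k j := by
    intro i j
    have := congrFun (congrFun hcomm i) j
    simpa [Matrix.mul_apply] using this
  have e1 := e 0 0; have e4 := e 1 1
  have f00 := f 0 0; have f01 := f 0 1; have f10 := f 1 0
  simp only [Fin.sum_univ_two] at e1 e4 f00 f01 f10
  -- m11 = m00
  have hsq : (M 0 0 + M 1 1) * (M 0 0 + M 1 1) = 0 := by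
    linear_combination e1 - e4 + (M 0 0 * M 1 1 + M 1 1 * M 1 1) * h2
  have h0011 : M 1 1 = M 0 0 := by
    have h := mul_self_eq_zero.mp hsq
    linear_combination -h + (M 1 1) * h2
  by_cases hb : M 0 1 ≠ 0
  · set b := X 0 1 / M 0 1 with hbdef
    set a := X 0 0 - b * M 0 0 with hadef
    have g00 : X 0 0 = a + b * M 0 0 := by rw [hadef]; ring
    have g01 : X 0 1 = b * M 0 1 := by rw [hbdef]; field_simp
    have g10 : X 1 0 = b * M 1 0 := by
      rw [hbdef]; rw [div_mul_eq_mul_div, eq_div_iff hb]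
      linear_combination -f00
    have g11 : X 1 1 = a + b * M 1 1 := by
      have hx : M 0 1 * X 1 1 = M 0 1 * X 0 0 := by
        linear_combination -f01 + X 0 1 * h0011
      have hx2 : X 1 1 = X 0 0 := mul_left_cancel₀ hb hx
      rw [hx2, hadef, h0011]; ring
    refine ⟨a, b, ?_⟩
    ext i j
    fin_cases i <;> fin_cases j <;>
      simp [Matrix.add_apply, Matrix.smul_apply, Matrix.one_apply, g00, g01, g10, g11]
  · push_neg at hb
    by_cases hc : M 1 0 ≠ 0
    · set b := X 1 0 / M 1 0 with hbdef
      set a := X 0 0 - b * M 0 0 with hadef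
      have g00 : X 0 0 = a + b * M 0 0 := by rw [hadef]; ring
      have g10 : X 1 0 = b * M 1 0 := by rw [hbdef]; field_simp
      have g01 : X 0 1 = b * M 0 1 := by
        rw [hb, mul_zero]
        have hx : X 0 1 * M 1 0 = 0 := by
          linear_combination f00 + X 1 0 * hb
        rcases mul_eq_zero.mp hx with h | h
        · exact h
        · exact absurd h hc
      have g11 : X 1 1 = a + b * M 1 1 := by
        have hx : M 1 0 * X 1 1 = M 1 0 * X 0 0 := by
          linear_combination f10 + X 1 0 * h0011
        have hx2 : X 1 1 = X 0 0 := mul_left_cancel₀ hc hx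
        rw [hx2, hadef, h0011]; ring
      refine ⟨a, b, ?_⟩
      ext i j
      fin_cases i <;> fin_cases j <;>
        simp [Matrix.add_apply, Matrix.smul_apply, Matrix.one_apply, g00, g01, g10, g11]
    · exfalso
      push_neg at hc
      apply hM0
      have hm00 : M 0 0 = 0 := by
        have h : M 0 0 * M 0 0 = 0 := by linear_combination e1 - M 1 0 * hb
        exact mul_self_eq_zero.mp h
      ext i j
      fin_cases i <;> fin_cases j <;> simp [hb, hc, hm00, h0011]

end Aux

open Matrix

section Aux2
variable {F : Type*} [Field F]

private lemma aux_cayley' (M : Matrix (Fin 2) (Fin 2) F) :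
    M * M = M.trace • M - M.det • (1 : Matrix (Fin 2) (Fin 2) F) := by
  ext i j
  fin_cases i <;> fin_cases j <;>
    simp [Matrix.mul_apply, Fin.sum_univ_two, Matrix.trace_fin_two, Matrix.det_fin_two,
      Matrix.one_apply, Matrix.smul_apply, Matrix.sub_apply] <;> ring

/-- In char 2, any element of `SL₂` of 2-power order squares to the identity. -/
private lemma aux_sq_one [CharP F 2] (g : Matrix.SpecialLinearGroup (Fin 2) F) (k : ℕ)
    (h : g ^ (2 ^ k) = 1) : g * g = 1 := by
  have hA : (g : Matrix (Fin 2) (Fin 2) F) ^ (2 ^ k) = 1 := by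
    have := congrArg (fun z : Matrix.SpecialLinearGroup (Fin 2) F =>
      (z : Matrix (Fin 2) (Fin 2) F)) h
    simpa using this
  set A : Matrix (Fin 2) (Fin 2) F := (g : Matrix (Fin 2) (Fin 2) F) with hAdef
  set M : Matrix (Fin 2) (Fin 2) F := A - 1 with hMdef
  have hAM : A = M + 1 := by rw [hMdef]; abel
  have goal_of_MM : M * M = 0 → g * g = 1 := by
    intro hMM
    have hAA : A * A = 1 := by
      have hMM2 : M + M = 0 := CharTwo.add_self_eq_zero M
      calc A * A = M * M + (M + M) + 1 := by rw [hAM]; noncomm_ring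
        _ = 1 := by rw [hMM, hMM2]; simp
    refine Subtype.coe_injective ?_
    show ((g * g : Matrix.SpecialLinearGroup (Fin 2) F) : Matrix (Fin 2) (Fin 2) F)
      = ((1 : Matrix.SpecialLinearGroup (Fin 2) F) : Matrix (Fin 2) (Fin 2) F)
    rw [Matrix.SpecialLinearGroup.coe_mul, ← hAdef, hAA, Matrix.SpecialLinearGroup.coe_one]
  have hMpow : M ^ (2 ^ k) = 0 := by
    rw [hMdef, sub_pow_char_pow_of_commute 2 k (Commute.one_right A), hA, one_pow, sub_self]
  by_cases hM0 : M = 0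
  · exact goal_of_MM (by rw [hM0]; simp)
  · have hdet : M.det = 0 := by
      have h1 : M.det ^ (2 ^ k) = 0 := by rw [← Matrix.det_pow, hMpow]; simp
      exact pow_eq_zero_iff (Nat.pos_of_ne_zero (by positivity)).ne' |>.mp h1
    have hMsq : M * M = M.trace • M := by
      rw [aux_cayley' M, hdet]; simp
    have key : ∀ n : ℕ, M ^ (n + 1) = M.trace ^ n • M := by
      intro n
      induction n with
      | zero => simp
      | succ n ih =>
        calc M ^ (n + 2) = M ^ (n + 1) * M := by rw [pow_succ]
          _ = (M.trace ^ n • M) * M := by rw [ih]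
          _ = M.trace ^ n • (M * M) := by rw [smul_mul_assoc]
          _ = M.trace ^ n • (M.trace • M) := by rw [hMsq]
          _ = M.trace ^ (n + 1) • M := by rw [smul_smul, pow_succ]
    have hk1 : 2 ^ k = (2 ^ k - 1) + 1 := by
      have : 0 < 2 ^ k := Nat.pow_pos (by norm_num)
      omega
    have hzero : M.trace ^ (2 ^ k - 1) • M = 0 := by
      rw [← key, ← hk1, hMpow]
    have htr0 : M.trace ^ (2 ^ k - 1) = 0 :=
      (smul_eq_zero.mp hzero).resolve_right hM0
    have hm : 2 ^ k - 1 ≠ 0 := by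
      intro hc
      apply hM0
      have : M ^ (2 ^ k) = M := by rw [hk1, hc, zero_add, pow_one]
      rw [← this, hMpow]
    have htr : M.trace = 0 := pow_eq_zero_iff hm |>.mp htr0
    exact goal_of_MM (by rw [hMsq, htr]; simp)

end Aux2

private lemma aux_not_three_dvd {a : ℕ} (ha : Odd a) : ¬ (3 ∣ 2 ^ a - 1) := by
  obtain ⟨m, rfl⟩ := ha
  have hmod : ∀ m : ℕ, 2 ^ (2 * m + 1) % 3 = 2 := by
    intro m
    induction m with
    | zero => norm_num
    | succ n ih =>
      have : 2 * (n + 1) + 1 = (2 * n + 1) + 2 := by ring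
      rw [this, pow_add, Nat.mul_mod, ih]; norm_num
  have h1 : 1 ≤ 2 ^ (2 * m + 1) := Nat.one_le_two_pow
  have h2 := hmod m
  generalize hgen : 2 ^ (2 * m + 1) = y at h1 h2 ⊢
  omega

/-- Let `F` be a finite field with `|F| = 2^a`, `a` odd, and let `x ∈ SL₂(F)` have
order 3. Then every 2-subgroup of `SL₂(F)` normalized by `x` is trivial. -/
theorem SL2_two_pow_odd_orderThree_normalizes_no_two_subgroup
    {F : Type*} [Field F] [Fintype F] (a : ℕ) (ha : Odd a)
    (hcard : Fintype.card F = 2 ^ a)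
    (x : Matrix.SpecialLinearGroup (Fin 2) F) (hx : orderOf x = 3)
    (P : Subgroup (Matrix.SpecialLinearGroup (Fin 2) F))
    (hP : IsPGroup 2 P) (hxP : x ∈ Subgroup.normalizer (P : Set (Matrix.SpecialLinearGroup (Fin 2) F))) :
    P = ⊥ := by
  classical
  -- `F` has characteristic 2
  haveI hchar : CharP F 2 := by
    haveI := ringChar.charP F
    obtain ⟨n, hp, hcard'⟩ := FiniteField.card F (ringChar F)
    have hdvd : ringChar F ∣ 2 ^ a := by
      rw [← hcard, hcard']
      exact dvd_pow_self _ (by positivity)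
    have h2 : ringChar F = 2 :=
      (Nat.prime_dvd_prime_iff_eq hp Nat.prime_two).mp (hp.dvd_of_dvd_pow hdvd)
    rw [← h2]; infer_instance
  have h2F : (2 : F) = 0 := by exact_mod_cast CharP.cast_eq_zero F 2
  have coe_inj : ∀ g h : Matrix.SpecialLinearGroup (Fin 2) F,
      (g : Matrix (Fin 2) (Fin 2) F) = (h : Matrix (Fin 2) (Fin 2) F) → g = h :=
    fun g h hgh => Subtype.ext hgh
  by_contra hPbot
  obtain ⟨⟨t, htP⟩, ht1'⟩ := Subgroup.ne_bot_iff_exists_ne_one.mp hPbot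
  have ht1 : t ≠ 1 := fun h => ht1' (Subtype.ext h)
  -- every element of `P` squares to 1
  have sq1 : ∀ g ∈ P, g * g = 1 := by
    intro g hg
    obtain ⟨k, hk⟩ := hP ⟨g, hg⟩
    apply aux_sq_one g k
    have := congrArg (Subtype.val) hk
    simpa using this
  -- the conjugate u = x t x⁻¹
  set u : Matrix.SpecialLinearGroup (Fin 2) F := x * t * x⁻¹ with hudef
  have huP : u ∈ P := ((Subgroup.mem_normalizer_iff.mp hxP) t).mp htP
  have hu1 : u ≠ 1 := by
    intro h
    apply ht1
    have : t = x⁻¹ * (x * t * x⁻¹) * x := by group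
    rw [← hudef, h] at this
    simpa using this
  -- t and u commute
  have htu : t * u = u * t := by
    have h1 := sq1 t htP
    have h2 := sq1 u huP
    have h3 := sq1 (t * u) (mul_mem htP huP)
    have ht' : t⁻¹ = t := inv_eq_of_mul_eq_one_right h1
    have hu' : u⁻¹ = u := inv_eq_of_mul_eq_one_right h2
    have htu' : (t * u)⁻¹ = t * u := inv_eq_of_mul_eq_one_right h3
    calc t * u = (t * u)⁻¹ := htu'.symm
      _ = u⁻¹ * t⁻¹ := mul_inv_rev t u
      _ = u * t := by rw [ht', hu']
  -- pass to matrices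
  set A : Matrix (Fin 2) (Fin 2) F := (t : Matrix (Fin 2) (Fin 2) F) with hAdef
  set B : Matrix (Fin 2) (Fin 2) F := (u : Matrix (Fin 2) (Fin 2) F) with hBdef
  set X : Matrix (Fin 2) (Fin 2) F := (x : Matrix (Fin 2) (Fin 2) F) with hXdef
  set M : Matrix (Fin 2) (Fin 2) F := A - 1 with hMdef
  set N : Matrix (Fin 2) (Fin 2) F := B - 1 with hNdef
  have hM0 : M ≠ 0 := by
    rw [hMdef, sub_ne_zero]
    intro h
    exact ht1 (coe_inj t 1 (by rw [← hAdef, h, Matrix.SpecialLinearGroup.coe_one]))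
  have hN0 : N ≠ 0 := by
    rw [hNdef, sub_ne_zero]
    intro h
    exact hu1 (coe_inj u 1 (by rw [← hBdef, h, Matrix.SpecialLinearGroup.coe_one]))
  have hAA : A * A = 1 := by
    have := congrArg Subtype.val (sq1 t htP)
    simpa [← hAdef] using this
  have hBB : B * B = 1 := by
    have := congrArg Subtype.val (sq1 u huP)
    simpa [← hBdef] using this
  have hAB : A * B = B * A := by
    have := congrArg Subtype.val htu
    simpa [← hAdef, ← hBdef] using this
  have sq_zero : ∀ (C : Matrix (Fin 2) (Fin 2) F), C * C = 1 → (C - 1) * (C - 1) = 0 := by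
    intro C hC
    have hCC : (C - 1) * (C - 1) = C * C - (C + C) + 1 := by noncomm_ring
    rw [hCC, hC, CharTwo.add_self_eq_zero, sub_zero]
    exact CharTwo.add_self_eq_zero 1
  have hM2 : M * M = 0 := sq_zero A hAA
  have hN2 : N * N = 0 := sq_zero B hBB
  have hNM : N * M = M * N := by
    have h : N * M - M * N = B * A - A * B := by rw [hNdef, hMdef]; noncomm_ring
    rw [← hAB] at h
    rw [sub_self] at h
    exact sub_eq_zero.mp h
  -- N lies in the span of 1 and M; in fact N = b • M
  obtain ⟨c, b, hN⟩ := aux_centralizer M N hM0 hM2 hNM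
  have hcc : c = 0 := by
    have hexp : N * N = (c * c) • (1 : Matrix (Fin 2) (Fin 2) F)
        + (c * b + b * c) • M + (b * b) • (M * M) := by
      rw [hN]
      simp only [add_mul, mul_add, smul_mul_assoc, mul_smul_comm, smul_smul, smul_add,
        add_smul, one_mul, mul_one]
      abel
    have hcb : c * b + b * c = 0 := by
      have : c * b + b * c = 2 * (c * b) := by ring
      rw [this, h2F, zero_mul]
    have hexp2 : (c * c) • (1 : Matrix (Fin 2) (Fin 2) F) = 0 := by
      rw [← hN2, hexp, hM2, hcb]; simp
    have h00 := congrFun (congrFun hexp2 0) 0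
    simp only [Matrix.smul_apply, Matrix.one_apply_eq, smul_eq_mul, mul_one,
      Matrix.zero_apply] at h00
    exact mul_self_eq_zero.mp h00
  rw [hcc, zero_smul, zero_add] at hN
  have hb0 : b ≠ 0 := by
    intro h
    rw [h, zero_smul] at hN
    exact hN0 hN
  -- the conjugation relation X * M = b • (M * X)
  have hBX : B * X = X * A := by
    have h : u * x = x * t := by rw [hudef]; group
    have := congrArg Subtype.val h
    simpa [← hAdef, ← hBdef, ← hXdef] using this
  have hXM : X * M = b • (M * X) := by
    have h1 : X * M = N * X := by
      have e1 : X * M = X * A - X := by rw [hMdef]; noncomm_ring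
      have e2 : N * X = B * X - X := by rw [hNdef]; noncomm_ring
      rw [e1, e2, hBX]
    rw [h1, hN, smul_mul_assoc]
  -- iterate three times
  have s2 : (X * X) * M = (b * b) • (M * (X * X)) := by
    calc (X * X) * M = X * (X * M) := by rw [mul_assoc]
      _ = X * (b • (M * X)) := by rw [hXM]
      _ = b • ((X * M) * X) := by rw [mul_smul_comm, mul_assoc]
      _ = b • ((b • (M * X)) * X) := by rw [hXM]
      _ = (b * b) • (M * (X * X)) := by rw [smul_mul_assoc, smul_smul, mul_assoc]
  have s3 : (X * X * X) * M = (b * b * b) • (M * (X * X * X)) := by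
    calc (X * X * X) * M = (X * X) * (X * M) := by rw [mul_assoc]
      _ = (X * X) * (b • (M * X)) := by rw [hXM]
      _ = b • (((X * X) * M) * X) := by rw [mul_smul_comm]; congr 1; noncomm_ring
      _ = b • (((b * b) • (M * (X * X))) * X) := by rw [s2]
      _ = (b * b * b) • (M * (X * X * X)) := by
          rw [smul_mul_assoc, smul_smul, show b * (b * b) = b * b * b from by ring]
          congr 1
          noncomm_ring
  have hX3 : X * X * X = 1 := by
    have h := pow_orderOf_eq_one x
    rw [hx] at h
    have := congrArg Subtype.val h
    have h3 : (x : Matrix (Fin 2) (Fin 2) F) ^ 3 = 1 := by simpa using this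
    rw [← hXdef] at h3
    calc X * X * X = X ^ 3 := by rw [pow_succ, pow_succ, pow_one]
      _ = 1 := h3
  rw [hX3, one_mul, mul_one] at s3
  -- b ^ 3 = 1
  have hb3 : b ^ 3 = 1 := by
    obtain ⟨i, j, hij⟩ : ∃ i j, M i j ≠ 0 := by
      by_contra h
      push_neg at h
      exact hM0 (by ext i j; simpa using h i j)
    have h := congrFun (congrFun s3 i) j
    simp only [Matrix.smul_apply, smul_eq_mul] at h
    have h' : (b * b * b - 1) * M i j = 0 := by linear_combination -h
    have hbb : b * b * b = 1 := by
      rcases mul_eq_zero.mp h' with h'' | h''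
      · exact sub_eq_zero.mp h''
      · exact absurd h'' hij
    calc b ^ 3 = b * b * b := by ring
      _ = 1 := hbb
  -- hence b = 1, since 3 ∤ |F| - 1
  have hb1 : b = 1 := by
    have hd1 : orderOf b ∣ 3 := orderOf_dvd_of_pow_eq_one hb3
    have hq : b ^ (Fintype.card F - 1) = 1 := FiniteField.pow_card_sub_one_eq_one b hb0
    have hd2 : orderOf b ∣ 2 ^ a - 1 := by
      rw [← hcard]
      exact orderOf_dvd_of_pow_eq_one hq
    rcases (Nat.prime_three).eq_one_or_self_of_dvd _ hd1 with h | h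
    · exact orderOf_eq_one_iff.mp h
    · exact absurd (h ▸ hd2) (aux_not_three_dvd ha)
  rw [hb1, one_smul] at hXM
  -- X commutes with M, so X = a' • 1 + c' • M
  obtain ⟨a', c', hXeq⟩ := aux_centralizer M X hM0 hM2 hXM
  obtain ⟨htr, hdet⟩ := aux_trace_det M hM0 hM2
  have htr' : M 0 0 + M 1 1 = 0 := by rwa [Matrix.trace_fin_two] at htr
  have hdet' : M 0 0 * M 1 1 - M 0 1 * M 1 0 = 0 := by rwa [Matrix.det_fin_two] at hdet
  have hdetX : X.det = 1 := x.prop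
  have ha2 : a' * a' = 1 := by
    rw [hXeq, Matrix.det_fin_two] at hdetX
    simp only [Matrix.add_apply, Matrix.smul_apply, Matrix.one_apply, smul_eq_mul] at hdetX
    norm_num at hdetX
    linear_combination hdetX - a' * c' * htr' - c' * c' * hdet'
  have ha1 : a' = 1 := by
    have h : (a' - 1) * (a' - 1) = 0 := by linear_combination ha2 - a' * h2F + h2F
    exact sub_eq_zero.mp (mul_self_eq_zero.mp h)
  rw [ha1, one_smul] at hXeq
  -- X * X = 1, contradicting order 3
  have hXX : X * X = 1 := by
    rw [hXeq]
    have : ((1 : Matrix (Fin 2) (Fin 2) F) + c' • M) * (1 + c' • M)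
        = 1 + (c' • M + c' • M) + (c' * c') • (M * M) := by
      simp only [add_mul, mul_add, one_mul, mul_one, smul_mul_assoc, mul_smul_comm, smul_smul,
        smul_add]
      abel
    rw [this, hM2, CharTwo.add_self_eq_zero, smul_zero, add_zero, add_zero]
  have hxx : x * x = 1 := by
    refine coe_inj _ _ ?_
    rw [Matrix.SpecialLinearGroup.coe_mul, ← hXdef, hXX, Matrix.SpecialLinearGroup.coe_one]
  have : orderOf x ∣ 2 := orderOf_dvd_of_pow_eq_one (by rw [pow_two]; exact hxx)
  rw [hx] at this
  norm_num at this
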